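/- Let Φ ∈ ℝ^{M×N} have restricted isometry constant δ := δ_s < 1 of order s. Let x ∈ ℝ^N be supported on Λ, y = Φx, let Λ' ⊆ {1,…,N} with |Λ ∪ Λ'| ≤ s, and let x' be a least-squares estimate of y on Λ'. Then (Φᵀ(y − Φx'))_{Λ'} = 0 and ‖(Φᵀ(y − Φx'))_{Λ\Λ'}‖ = ‖(ΦᵀΦ(x − x'))_{Λ∪Λ'}‖ ≥ (1 − δ)·‖x − x'‖. -/
import Mathlib


open Finset

noncomputable section

/-- The Euclidean (ℓ₂) norm of a vector in `Fin n → ℝ`. -/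
def l2norm {n : ℕ} (v : Fin n → ℝ) : ℝ := Real.sqrt (∑ i, (v i) ^ 2)

/-- The sparsity `‖v‖₀` of a vector: the number of its nonzero entries. -/
def sparsity {n : ℕ} (v : Fin n → ℝ) : ℕ := (Finset.univ.filter fun i => v i ≠ 0).card

/-- The support of a vector, as a `Finset`. -/
def suppF {n : ℕ} (v : Fin n → ℝ) : Finset (Fin n) := Finset.univ.filter fun i => v i ≠ 0

/-- `restr v S` is the vector agreeing with `v` on `S` and zero outside `S`. -/
def restr {n : ℕ} (v : Fin n → ℝ) (S : Finset (Fin n)) : Fin n → ℝ :=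
  fun i => if i ∈ S then v i else 0

/-- `Φ` has restricted isometry constant `δ < 1` of order `s`:
`(1-δ)‖z‖² ≤ ‖Φz‖² ≤ (1+δ)‖z‖²` for every `s`-sparse `z`. -/
def HasRIC {M N : ℕ} (Φ : Matrix (Fin M) (Fin N) ℝ) (s : ℕ) (δ : ℝ) : Prop :=
  δ < 1 ∧ ∀ z : Fin N → ℝ, sparsity z ≤ s →
    (1 - δ) * (l2norm z) ^ 2 ≤ (l2norm (Φ.mulVec z)) ^ 2 ∧
      (l2norm (Φ.mulVec z)) ^ 2 ≤ (1 + δ) * (l2norm z) ^ 2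

/-- `Λ` is a top-`k` support of `v`: `|Λ| = k` and every entry of `v` inside `Λ`
dominates (in magnitude) every entry outside `Λ`. -/
def IsTopSupport {n : ℕ} (v : Fin n → ℝ) (k : ℕ) (Λ : Finset (Fin n)) : Prop :=
  Λ.card = k ∧ ∀ i ∈ Λ, ∀ j ∉ Λ, |v j| ≤ |v i|

/-- `x'` is a least-squares estimate of `y` on the support `Λ`. -/
def IsLSE {M N : ℕ} (Φ : Matrix (Fin M) (Fin N) ℝ) (y : Fin M → ℝ)
    (Λ : Finset (Fin N)) (x' : Fin N → ℝ) : Prop :=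
  suppF x' ⊆ Λ ∧ ∀ z : Fin N → ℝ, suppF z ⊆ Λ →
    l2norm (y - Φ.mulVec x') ≤ l2norm (y - Φ.mulVec z)


open Matrix

lemma sum_sq_nonneg' {n : ℕ} (v : Fin n → ℝ) : (0:ℝ) ≤ ∑ i, v i ^ 2 :=
  Finset.sum_nonneg fun _ _ => sq_nonneg _

lemma l2norm_sq {n : ℕ} (v : Fin n → ℝ) : l2norm v ^ 2 = ∑ i, v i ^ 2 :=
  Real.sq_sqrt (sum_sq_nonneg' v)

lemma l2norm_nonneg' {n : ℕ} (v : Fin n → ℝ) : 0 ≤ l2norm v := Real.sqrt_nonneg _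

/-- orthogonality of the least-squares residual on its own support
and a lower bound off the support. -/
theorem lse_residual_orthogonality {M N : ℕ} (Φ : Matrix (Fin M) (Fin N) ℝ)
    (s : ℕ) (δ : ℝ) (hRIC : HasRIC Φ s δ)
    (x : Fin N → ℝ) (Λ : Finset (Fin N)) (hx : suppF x ⊆ Λ)
    (y : Fin M → ℝ) (hy : y = Φ.mulVec x)
    (Λ' : Finset (Fin N)) (hcard : (Λ ∪ Λ').card ≤ s)
    (x' : Fin N → ℝ) (hx' : IsLSE Φ y Λ' x') :
    restr (Φ.transpose.mulVec (y - Φ.mulVec x')) Λ' = 0 ∧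
      l2norm (restr (Φ.transpose.mulVec (y - Φ.mulVec x')) (Λ \ Λ')) =
        l2norm (restr ((Φ.transpose * Φ).mulVec (x - x')) (Λ ∪ Λ')) ∧
      (1 - δ) * l2norm (x - x') ≤
        l2norm (restr (Φ.transpose.mulVec (y - Φ.mulVec x')) (Λ \ Λ')) := by
  obtain ⟨hδ, hR⟩ := hRIC
  obtain ⟨hsupp', hmin⟩ := hx'
  set r : Fin M → ℝ := y - Φ.mulVec x' with hr
  set w : Fin N → ℝ := Φ.transpose.mulVec r with hw
  have hr2 : Φ.mulVec (x - x') = r := by rw [hr, hy, Matrix.mulVec_sub]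
  -- Part 1 : w vanishes on Λ'
  have part1 : ∀ i ∈ Λ', w i = 0 := by
    intro i hi
    set a : ℝ := w i with ha
    set C : ℝ := ∑ j, (Φ j i) ^ 2 with hCdef
    have hC0 : (0:ℝ) ≤ C := sum_sq_nonneg' _
    have key : ∀ t : ℝ, 0 ≤ -2 * t * a + t ^ 2 * C := by
      intro t
      set z : Fin N → ℝ := fun j => x' j + if j = i then t else 0 with hzdef
      have hz : suppF z ⊆ Λ' := by
        intro j hj
        simp only [suppF, Finset.mem_filter, Finset.mem_univ, true_and, hzdef] at hj
        by_cases h : j = i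
        · subst h; exact hi
        · apply hsupp'
          simp only [suppF, Finset.mem_filter, Finset.mem_univ, true_and]
          simpa [h] using hj
      have hmz : y - Φ.mulVec z = fun j' => r j' - t * Φ j' i := by
        funext j'
        have : Φ.mulVec z j' = Φ.mulVec x' j' + t * Φ j' i := by
          simp only [Matrix.mulVec, dotProduct, hzdef, mul_add,
            Finset.sum_add_distrib, mul_ite, mul_zero, Finset.sum_ite_eq']
          simp [mul_comm]
        simp only [hr, Pi.sub_apply, this]
        ring
      have hle := hmin z hz
      rw [hmz] at hle
      have hsum : ∑ j, r j ^ 2 ≤ ∑ j, (r j - t * Φ j i) ^ 2 := by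
        rwa [l2norm, l2norm, Real.sqrt_le_sqrt_iff (sum_sq_nonneg' _)] at hle
      have hexp : ∑ j, (r j - t * Φ j i) ^ 2 =
          ∑ j, r j ^ 2 + (-2 * t * (∑ j, Φ j i * r j) + t ^ 2 * C) := by
        rw [hCdef, Finset.mul_sum, Finset.mul_sum, ← Finset.sum_add_distrib,
          ← Finset.sum_add_distrib]
        exact Finset.sum_congr rfl fun j _ => by ring
      have hai : a = ∑ j, Φ j i * r j := by
        simp [ha, hw, Matrix.mulVec, dotProduct, Matrix.transpose_apply]
      rw [hexp] at hsum
      rw [hai]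
      linarith
    have h1 := key (a / (C + 1))
    have hC1 : (0:ℝ) < C + 1 := by linarith
    have h3 : (-2 * (a / (C + 1)) * a + (a / (C + 1)) ^ 2 * C) * (C + 1) ^ 2 =
        -(a ^ 2) * (C + 2) := by
      field_simp
      ring
    have h2 : 0 ≤ -(a ^ 2) * (C + 2) := by
      rw [← h3]
      exact mul_nonneg h1 (by positivity)
    nlinarith [sq_nonneg a]
  have part1' : restr w Λ' = 0 := by
    funext i
    simp only [restr, Pi.zero_apply]
    by_cases h : i ∈ Λ'
    · simp [h, part1 i h]
    · simp [h]
  -- w as (ΦᵀΦ)(x - x')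
  have hwx : (Φ.transpose * Φ).mulVec (x - x') = w := by
    rw [hw, ← hr2, Matrix.mulVec_mulVec]
  -- Part 2
  have veq : restr w (Λ \ Λ') = restr w (Λ ∪ Λ') := by
    funext i
    simp only [restr, Finset.mem_sdiff, Finset.mem_union]
    by_cases h1 : i ∈ Λ'
    · simp [h1, part1 i h1]
    · by_cases h2 : i ∈ Λ <;> simp [h1, h2]
  -- Part 3
  have hsupph : suppF (x - x') ⊆ Λ ∪ Λ' := by
    intro i hi
    simp only [suppF, Finset.mem_filter, Finset.mem_univ, true_and, Pi.sub_apply] at hi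
    rw [Finset.mem_union]
    by_contra hcon
    push_neg at hcon
    have h1 : x i = 0 := by
      by_contra hne
      exact hcon.1 (hx (by simp [suppF, hne]))
    have h2 : x' i = 0 := by
      by_contra hne
      exact hcon.2 (hsupp' (by simp [suppF, hne]))
    rw [h1, h2] at hi
    simp at hi
  have hsp : sparsity (x - x') ≤ s :=
    le_trans (Finset.card_le_card hsupph) hcard
  have hinner : ∑ i, (x - x') i * w i = ∑ j, r j ^ 2 := by
    calc ∑ i, (x - x') i * w i = (x - x') ⬝ᵥ (Φ.transpose.mulVec r) := rfl
      _ = ((x - x') ᵥ* Φ.transpose) ⬝ᵥ r := Matrix.dotProduct_mulVec _ _ _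
      _ = (Φ.mulVec (x - x')) ⬝ᵥ r := by rw [Matrix.vecMul_transpose]
      _ = ∑ j, r j ^ 2 := by rw [hr2]; simp [dotProduct, sq]
  have hlow : (1 - δ) * (l2norm (x - x')) ^ 2 ≤ ∑ j, r j ^ 2 := by
    have h := (hR _ hsp).1
    rw [hr2] at h
    exact h.trans_eq (l2norm_sq r)
  have hCS : ∑ i, (x - x') i * w i ≤
      l2norm (x - x') * l2norm (restr w (Λ ∪ Λ')) := by
    have heq : ∑ i, (x - x') i * w i = ∑ i, (x - x') i * restr w (Λ ∪ Λ') i := by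
      refine Finset.sum_congr rfl fun i _ => ?_
      by_cases hiT : i ∈ Λ ∪ Λ'
      · simp [restr, hiT]
      · have h0 : (x - x') i = 0 := by
          by_contra hne
          exact hiT (hsupph (by simpa [suppF] using hne))
        simp [h0]
    rw [heq]
    have hcs := Finset.sum_mul_sq_le_sq_mul_sq Finset.univ
      (fun i => (x - x') i) (restr w (Λ ∪ Λ'))
    have h2 : (∑ i, (x - x') i * restr w (Λ ∪ Λ') i) ^ 2 ≤
        (l2norm (x - x') * l2norm (restr w (Λ ∪ Λ'))) ^ 2 := by
      rw [mul_pow, l2norm_sq, l2norm_sq]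
      exact hcs
    nlinarith [mul_nonneg (l2norm_nonneg' (x - x')) (l2norm_nonneg' (restr w (Λ ∪ Λ')))]
  have final : (1 - δ) * l2norm (x - x') ≤ l2norm (restr w (Λ ∪ Λ')) := by
    rcases eq_or_lt_of_le (l2norm_nonneg' (x - x')) with h0 | h0
    · rw [← h0, mul_zero]
      exact l2norm_nonneg' _
    · nlinarith [hlow, hinner, hCS]
  refine ⟨part1', ?_, ?_⟩
  · rw [veq, hwx]
  · rw [veq]; exact final
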